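/- The integral quandle ring ℤ[R₃] of the dihedral quandle R₃ of order three has only trivial idempotents: every idempotent of ℤ[R₃] is equal to e_x for some x ∈ R₃. -/

import Mathlib

/-- The quandle ring multiplication on `X →₀ k` determined by
`e_x · e_y = e_{op x y}` extended bilinearly. -/
noncomputable def qmul {X : Type*} {k : Type*} [CommRing k] (op : X → X → X)
    (f g : X →₀ k) : X →₀ k :=
  f.sum fun x a => g.sum fun y b => Finsupp.single (op x y) (a * b)

/-- The dihedral quandle operation on `ZMod n`: `i ∗ j = 2j - i`. -/
def dihedralOp (n : ℕ) : ZMod n → ZMod n → ZMod n := fun i j => 2 * j - i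

lemma qmul_apply_R3 (u : ZMod 3 →₀ ℤ) (z : ZMod 3) :
    (qmul (dihedralOp 3) u u) z = ∑ x : ZMod 3, ∑ y : ZMod 3,
      if dihedralOp 3 x y = z then u x * u y else 0 := by
  rw [qmul, Finsupp.sum_fintype _ _ (fun x => by simp [Finsupp.sum_fintype]),
    Finsupp.finset_sum_apply]
  refine Finset.sum_congr rfl fun x _ => ?_
  rw [Finsupp.sum_fintype _ _ (fun y => by simp), Finsupp.finset_sum_apply]
  exact Finset.sum_congr rfl fun y _ => Finsupp.single_apply

lemma sum_zmod3 (f : ZMod 3 → ℤ) : ∑ x : ZMod 3, f x = f 0 + f 1 + f 2 := by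
  show ∑ x : Fin 3, f x = _
  exact Fin.sum_univ_three f

/-- The integral quandle ring `ℤ[R₃]` of the dihedral quandle of order three has
only trivial idempotents. -/
theorem idempotents_of_int_quandle_ring_R3_trivial
    (u : ZMod 3 →₀ ℤ) (hu : u ≠ 0) (hid : qmul (dihedralOp 3) u u = u) :
    ∃ x : ZMod 3, u = Finsupp.single x 1 := by
  set a := u 0 with ha
  set b := u 1 with hb
  set c := u 2 with hc
  have key : ∀ z : ZMod 3, (qmul (dihedralOp 3) u u) z = u z := fun z => by rw [hid]
  have e0 := key 0
  have e1 := key 1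
  have e2 := key 2
  rw [qmul_apply_R3, sum_zmod3] at e0 e1 e2
  simp only [sum_zmod3 (fun y => if dihedralOp 3 _ y = _ then _ else _)] at e0 e1 e2
  simp (config := { decide := true }) only [dihedralOp, ite_true, ite_false, if_true, if_false] at e0 e1 e2
  have hs : (a + b + c) * (a + b + c - 1) = 0 := by linear_combination e0 + e1 + e2
  have f1 : (a - b) * (a + b - 2*c - 1) = 0 := by linear_combination e0 - e1
  have f2 : (b - c) * (b + c - 2*a - 1) = 0 := by linear_combination e1 - e2
  have f3 : (a - c) * (a + c - 2*b - 1) = 0 := by linear_combination e0 - e2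
  have hne : a ≠ 0 ∨ b ≠ 0 ∨ c ≠ 0 := by
    by_contra hcon
    push_neg at hcon
    apply hu
    ext z
    rcases (show z = 0 ∨ z = 1 ∨ z = 2 by fin_cases z <;> [exact Or.inl rfl; exact Or.inr (Or.inl rfl); exact Or.inr (Or.inr rfl)]) with rfl | rfl | rfl <;>
      simp (config := { decide := true }) [← ha, ← hb, ← hc, hcon]
  clear_value a b c
  have htri : (a = 1 ∧ b = 0 ∧ c = 0) ∨ (b = 1 ∧ a = 0 ∧ c = 0) ∨
      (c = 1 ∧ a = 0 ∧ b = 0) := by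
    rcases mul_eq_zero.1 hs with h | h <;>
    rcases mul_eq_zero.1 f1 with g1 | g1 <;>
    rcases mul_eq_zero.1 f2 with g2 | g2 <;>
    rcases mul_eq_zero.1 f3 with g3 | g3 <;> omega
  rcases htri with ⟨h1', h2', h3'⟩ | ⟨h1', h2', h3'⟩ | ⟨h1', h2', h3'⟩
  · exact ⟨0, Finsupp.ext fun z => by
      rcases (show z = 0 ∨ z = 1 ∨ z = 2 by fin_cases z <;> [exact Or.inl rfl; exact Or.inr (Or.inl rfl); exact Or.inr (Or.inr rfl)]) with rfl | rfl | rfl <;>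
        simp (config := { decide := true }) [← ha, ← hb, ← hc, h1', h2', h3', Finsupp.single_apply]⟩
  · exact ⟨1, Finsupp.ext fun z => by
      rcases (show z = 0 ∨ z = 1 ∨ z = 2 by fin_cases z <;> [exact Or.inl rfl; exact Or.inr (Or.inl rfl); exact Or.inr (Or.inr rfl)]) with rfl | rfl | rfl <;>
        simp (config := { decide := true }) [← ha, ← hb, ← hc, h1', h2', h3', Finsupp.single_apply]⟩
  · exact ⟨2, Finsupp.ext fun z => by
      rcases (show z = 0 ∨ z = 1 ∨ z = 2 by fin_cases z <;> [exact Or.inl rfl; exact Or.inr (Or.inl rfl); exact Or.inr (Or.inr rfl)]) with rfl | rfl | rfl <;>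
        simp (config := { decide := true }) [← ha, ← hb, ← hc, h1', h2', h3', Finsupp.single_apply]⟩
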